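/- Let d = (d_1, d_2, …) be a directive sequence of positive integers and n ≥ 1. If a ∈ {0,1} is the last symbol of the standard word s_n, then the word a·s_n^{d_{n+1}+2} (the letter a followed by d_{n+1}+2 consecutive copies of s_n) is not an element of Fac(d). -/

import Mathlib

/-- `stdWord d (n+1)` is the standard word `s_n` for the directive sequence
`(d 1, d 2, …)`: `stdWord d 0 = s_{-1} = 1`, `stdWord d 1 = s_0 = 0`,
and `s_n = s_{n-1}^{d_n} s_{n-2}` for `n ≥ 1`. -/
def stdWord (d : ℕ → ℕ) : ℕ → List Bool
  | 0 => [true]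
  | 1 => [false]
  | (n + 2) => (List.replicate (d (n + 1)) (stdWord d (n + 1))).flatten ++ stdWord d n

/-- `stdLen d (n+1)` is the length `l_n` of the standard word `s_n`;
so `l_{-1} = l_0 = 1` and `l_n = d_n l_{n-1} + l_{n-2}`. -/
def stdLen (d : ℕ → ℕ) : ℕ → ℕ
  | 0 => 1
  | 1 => 1
  | (n + 2) => d (n + 1) * stdLen d (n + 1) + stdLen d n

/-- `Fac d` is the Sturmian language `St(α_d)` of the directive sequence `d`:
all factors of the standard words `s_n`, `n ≥ 0`. -/
def Fac (d : ℕ → ℕ) : Set (List Bool) :=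
  {w | ∃ m : ℕ, w <:+: stdWord d (m + 1)}

namespace SturmAux

def phi (A B : List Bool) (t : List Bool) : List Bool :=
  (t.map fun c => cond c B A).flatten

@[simp] theorem phi_nil (A B : List Bool) : phi A B [] = [] := rfl

@[simp] theorem phi_cons (A B : List Bool) (c : Bool) (t : List Bool) :
    phi A B (c :: t) = cond c B A ++ phi A B t := rfl

@[simp] theorem phi_append (A B s t : List Bool) :
    phi A B (s ++ t) = phi A B s ++ phi A B t := by
  simp [phi]

theorem phi_replicate_false (A B : List Bool) (m : ℕ) :
    phi A B (List.replicate m false) = (List.replicate m A).flatten := by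
  induction m with
  | zero => rfl
  | succ m ih => simp [List.replicate_succ, ih, phi]

theorem phi_flatten_replicate (A B u : List Bool) (m : ℕ) :
    phi A B (List.replicate m u).flatten = (List.replicate m (phi A B u)).flatten := by
  induction m with
  | zero => rfl
  | succ m ih => simp [List.replicate_succ, ih]

theorem phi_comp (X Y A B t : List Bool) :
    phi X Y (phi A B t) = phi (phi X Y A) (phi X Y B) t := by
  induction t with
  | nil => rfl
  | cons c t ih => cases c <;> simp [ih]

theorem phi_eq_nil {A B : List Bool} (hA : A ≠ []) (hB : B ≠ []) {t : List Bool}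
    (h : phi A B t = []) : t = [] := by
  cases t with
  | nil => rfl
  | cons c t =>
    rw [phi_cons, List.append_eq_nil_iff] at h
    cases c
    · exact absurd h.1 hA
    · exact absurd h.1 hB

theorem stdWord_zero (e : ℕ → ℕ) : stdWord e 0 = [true] := rfl
theorem stdWord_one (e : ℕ → ℕ) : stdWord e 1 = [false] := rfl
theorem stdWord_add_two (e : ℕ → ℕ) (k : ℕ) :
    stdWord e (k + 2) = (List.replicate (e (k + 1)) (stdWord e (k + 1))).flatten ++ stdWord e k := rfl

theorem stdWord_ne_nil (e : ℕ → ℕ) : ∀ k, stdWord e k ≠ []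
  | 0 => by simp [stdWord]
  | 1 => by simp [stdWord]
  | (k + 2) => by
    rw [stdWord_add_two]
    intro h
    exact stdWord_ne_nil e k (List.append_eq_nil_iff.mp h).2

theorem flatten_replicate_singleton (m : ℕ) (a : Bool) :
    (List.replicate m [a]).flatten = List.replicate m a := by
  induction m with
  | zero => rfl
  | succ m ih => simp [List.replicate_succ, ih]

theorem stdWord_two (e : ℕ → ℕ) : stdWord e 2 = List.replicate (e 1) false ++ [true] := by
  rw [stdWord_add_two, stdWord_one, stdWord_zero, flatten_replicate_singleton]

theorem length_flatten_replicate (m : ℕ) (l : List Bool) :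
    (List.replicate m l).flatten.length = m * l.length := by
  induction m with
  | zero => simp
  | succ m ih => simp [List.replicate_succ, ih, Nat.succ_mul, Nat.add_comm]

theorem length_stdWord_pos (e : ℕ → ℕ) (k : ℕ) : 0 < (stdWord e k).length :=
  List.length_pos_iff.mpr (stdWord_ne_nil e k)

theorem length_stdWord_lt (e : ℕ → ℕ) (he : ∀ i, 1 ≤ i → 0 < e i) (n : ℕ) (hn : 1 ≤ n) :
    (stdWord e n).length < (stdWord e (n + 1)).length := by
  obtain ⟨j, rfl⟩ : ∃ j, n = j + 1 := ⟨n - 1, by omega⟩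
  rw [stdWord_add_two, List.length_append, length_flatten_replicate]
  have h1 : 1 ≤ e (j + 1) := he _ (by omega)
  have h2 : 0 < (stdWord e j).length := length_stdWord_pos e j
  have h3 : 0 < (stdWord e (j + 1)).length := length_stdWord_pos e (j + 1)
  nlinarith

theorem stdWord_prefix_succ (e : ℕ → ℕ) (he : ∀ i, 1 ≤ i → 0 < e i) (k : ℕ) :
    stdWord e (k + 1) <+: stdWord e (k + 2) := by
  obtain ⟨q, hq⟩ : ∃ q, e (k + 1) = q + 1 := ⟨e (k + 1) - 1, by have := he (k + 1) (by omega); omega⟩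
  rw [stdWord_add_two, hq, List.replicate_succ]
  refine ⟨(List.replicate q (stdWord e (k + 1))).flatten ++ stdWord e k, ?_⟩
  simp

theorem stdWord_prefix_mono (e : ℕ → ℕ) (he : ∀ i, 1 ≤ i → 0 < e i) {i j : ℕ} (h : i ≤ j) :
    stdWord e (i + 1) <+: stdWord e (j + 1) := by
  induction j, h using Nat.le_induction with
  | base => exact List.prefix_refl _
  | succ j hj ih => exact ih.trans (stdWord_prefix_succ e he j)

theorem getLast?_stdWord (e : ℕ → ℕ) : ∀ k, (stdWord e k).getLast? = some (decide (k % 2 = 0))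
  | 0 => by simp [stdWord]
  | 1 => by simp [stdWord]
  | (k + 2) => by
    rw [stdWord_add_two, List.getLast?_append_of_ne_nil _ (stdWord_ne_nil e k),
      getLast?_stdWord e k]
    congr 1
    simp [Nat.add_mod_right]

end SturmAux

namespace SturmAux

def Rel (a b : Bool) : Prop := a = true → b = false

def NoTT (l : List Bool) : Prop := List.Chain' Rel l

def OK (l : List Bool) : Prop := NoTT l ∧ ∀ b ∈ l.head?, b = false

theorem rel_false (a : Bool) : Rel a false := fun _ => rfl

theorem OK.append {u v : List Bool} (hu : OK u) (hv : OK v) : OK (u ++ v) := by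
  constructor
  · exact List.isChain_append.mpr ⟨hu.1, hv.1, fun x _ y hy => by rw [hv.2 y hy]; exact rel_false x⟩
  · intro b hb
    cases u with
    | nil => exact hv.2 b (by simpa using hb)
    | cons c u' => exact hu.2 b (by simpa using hb)

theorem OK_nil : OK ([] : List Bool) := ⟨List.isChain_nil, by simp⟩

theorem OK_flatten_replicate {l : List Bool} (h : OK l) (m : ℕ) :
    OK (List.replicate m l).flatten := by
  induction m with
  | zero => exact OK_nil
  | succ m ih => rw [List.replicate_succ]; simpa using h.append ih

theorem chain'_replicate_false (m : ℕ) : NoTT (List.replicate m false) := by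
  induction m with
  | zero => exact List.isChain_nil
  | succ m ih =>
    rw [List.replicate_succ]
    exact List.isChain_cons.mpr ⟨(fun y _ h => nomatch h), ih⟩

theorem getLast?_replicate_false (m : ℕ) :
    (List.replicate (m + 1) false).getLast? = some false := by
  rw [List.replicate_succ']; exact List.getLast?_concat

theorem OK_block (q : ℕ) (hq : 1 ≤ q) : OK (List.replicate q false ++ [true]) := by
  obtain ⟨q', rfl⟩ : ∃ q', q = q' + 1 := ⟨q - 1, by omega⟩
  constructor
  · refine List.isChain_append.mpr ⟨chain'_replicate_false _, List.isChain_singleton _, ?_⟩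
    intro x hx y hy
    rw [getLast?_replicate_false] at hx
    simp at hx
    subst hx
    intro h; cases h
  · intro b hb
    rw [List.replicate_succ] at hb
    simpa using hb

theorem OK_stdWord (e : ℕ → ℕ) (he : ∀ i, 1 ≤ i → 0 < e i) : ∀ k, OK (stdWord e (k + 1))
  | 0 => ⟨List.isChain_singleton _, by simp [stdWord]⟩
  | 1 => by rw [show (1:ℕ)+1 = 2 from rfl, stdWord_two]; exact OK_block (e 1) (he 1 le_rfl)
  | (k + 2) => by
    rw [stdWord_add_two]
    exact (OK_flatten_replicate (OK_stdWord e he (k + 1)) _).append (OK_stdWord e he k)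

theorem NoTT_stdWord (e : ℕ → ℕ) (he : ∀ i, 1 ≤ i → 0 < e i) (k : ℕ) : NoTT (stdWord e k) := by
  cases k with
  | zero => exact List.isChain_singleton _
  | succ k => exact (OK_stdWord e he k).1

theorem OK_psi {Q : ℕ} (hQ : 1 ≤ Q) (t : List Bool) :
    OK (phi (List.replicate Q false ++ [true]) [false] t) := by
  induction t with
  | nil => exact OK_nil
  | cons c t ih =>
    rw [phi_cons]
    refine OK.append ?_ ih
    cases c
    · exact OK_block Q hQ
    · exact ⟨List.isChain_singleton _, by simp⟩

theorem peel {x r b s : List Bool} (h : x ++ r = b ++ s) (hl : b.length ≤ x.length) :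
    ∃ x', x = b ++ x' ∧ x' ++ r = s := by
  have hb : b <+: x := by
    rcases List.prefix_or_prefix_of_prefix (⟨s, h.symm⟩ : b <+: x ++ r)
      (List.prefix_append x r) with hbx | hxb
    · exact hbx
    · have hx : x = b := List.IsPrefix.eq_of_length hxb (le_antisymm hxb.length_le hl)
      rw [hx]
  obtain ⟨x', rfl⟩ := hb
  rw [List.append_assoc] at h
  exact ⟨x', rfl, List.append_cancel_left h⟩

theorem one (q : ℕ) : ∀ (t x y : List Bool),
    x ++ [true] ++ y = phi (List.replicate q false ++ [true]) [false] t →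
    ∃ t₁ t₂, t = t₁ ++ false :: t₂ ∧
      x = phi (List.replicate q false ++ [true]) [false] t₁ ++ List.replicate q false ∧
      y = phi (List.replicate q false ++ [true]) [false] t₂ := by
  intro t
  induction t with
  | nil =>
    intro x y h
    simp [phi] at h
  | cons c t ih =>
    intro x y h
    rw [phi_cons] at h
    cases c
    · simp only [cond_false] at h
      rcases le_or_gt (q + 1) x.length with hlen | hlen
      · rw [List.append_assoc x] at h
        obtain ⟨x', rfl, h'⟩ := peel h (by simp; omega)
        rw [← List.append_assoc] at h'
        obtain ⟨t₁, t₂, rfl, hx, hy⟩ := ih x' y h'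
        refine ⟨false :: t₁, t₂, rfl, ?_, hy⟩
        rw [phi_cons, hx]
        simp [List.append_assoc]
      · have hxq : x.length ≤ q := by omega
        have hq : x.length = q := by
          by_contra hne
          have hlt : x.length < q := lt_of_le_of_ne hxq hne
          have h1 : (x ++ [true] ++ y)[x.length]? = some true := by
            rw [List.append_assoc, List.getElem?_append_right le_rfl]
            simp
          rw [h, List.append_assoc] at h1
          rw [List.getElem?_append] at h1
          simp [hlt, List.getElem?_replicate] at h1
        rw [List.append_assoc, List.append_assoc] at h
        obtain ⟨hx, hrest⟩ := List.append_inj h (by simp [hq])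
        have hy : y = phi (List.replicate q false ++ [true]) [false] t := by
          simpa using hrest
        exact ⟨[], t, rfl, by simpa using hx, hy⟩
    · simp only [cond_true] at h
      rcases le_or_gt 1 x.length with hlen | hlen
      · obtain ⟨x', rfl, h'⟩ := peel (by simpa [List.append_assoc] using h :
          x ++ ([true] ++ y) = [false] ++ phi (List.replicate q false ++ [true]) [false] t)
          (by simpa using hlen)
        obtain ⟨t₁, t₂, rfl, hx, hy⟩ := ih x' y (by simpa [List.append_assoc] using h')
        refine ⟨true :: t₁, t₂, rfl, ?_, hy⟩
        rw [phi_cons, hx]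
        simp
      · have hx : x = [] := List.length_eq_zero_iff.mp (by omega)
        subst hx
        simp at h

theorem NoTT.tail {c : Bool} {t : List Bool} (h : NoTT (c :: t)) : NoTT t :=
  (List.isChain_cons.mp h).2

theorem run (q : ℕ) : ∀ (t : List Bool), NoTT t → ∀ x y : List Bool,
    x ++ List.replicate (q + 2) false ++ y = phi (List.replicate q false ++ [true]) [false] t →
    False := by
  intro t
  induction t with
  | nil =>
    intro _ x y h
    simp [phi] at h
  | cons c t ih =>
    intro hno x y h
    rw [phi_cons] at h
    cases c
    · simp only [cond_false] at h
      rcases le_or_gt (q + 1) x.length with hlen | hlen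
      · rw [List.append_assoc x] at h
        obtain ⟨x', _, h'⟩ := peel h (by simp; omega)
        rw [← List.append_assoc] at h'
        exact ih hno.tail x' y h'
      · have h1 : (x ++ List.replicate (q + 2) false ++ y)[q]? = some false := by
          rw [List.append_assoc, List.getElem?_append_right (by omega)]
          have h2 : q - x.length < q + 2 := by omega
          simp [List.getElem?_append, List.getElem?_replicate, h2]
        rw [h, List.append_assoc, List.getElem?_append_right (by simp)] at h1
        simp at h1
    · simp only [cond_true] at h
      rcases le_or_gt 1 x.length with hlen | hlen
      · rw [List.append_assoc x] at h
        obtain ⟨x', _, h'⟩ := peel h (by simp; omega)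
        rw [← List.append_assoc] at h'
        exact ih hno.tail x' y h'
      · have hx : x = [] := List.length_eq_zero_iff.mp (by omega)
        subst hx
        have h' : List.replicate (q + 1) false ++ y
            = phi (List.replicate q false ++ [true]) [false] t := by
          rw [List.replicate_succ] at h
          simpa using h
        cases t with
        | nil => simp [phi, List.replicate_succ] at h'
        | cons c' t' =>
          have hc' : c' = false := by
            have hh := (List.isChain_cons.mp hno).1
            cases c'
            · rfl
            · exact (hh true (by simp)) rfl
          subst hc'
          rw [phi_cons] at h'
          simp only [cond_false] at h'
          have h1 : (List.replicate (q + 1) false ++ y)[q]? = some false := by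
            have hq : q < q + 1 := Nat.lt_succ_self q
            simp [List.getElem?_append, List.getElem?_replicate, hq]
          rw [h', List.append_assoc, List.getElem?_append_right (by simp)] at h1
          simp at h1

theorem gap {B C : List Bool} (hC : C ≠ []) (hlen : C.length < B.length) :
    ∀ w : List Bool, NoTT w → (phi B C w).length = B.length → w = [false] := by
  have hCpos : 0 < C.length := List.length_pos_iff.mpr hC
  have hB : B ≠ [] := by
    intro h
    rw [h] at hlen
    simp at hlen
  intro w hno hw
  match w with
  | [] =>
    exfalso
    simp [phi] at hw
    omega
  | false :: w' =>
    rw [phi_cons] at hw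
    simp only [cond_false, List.length_append] at hw
    have : (phi B C w').length = 0 := by omega
    have hnil : phi B C w' = [] := List.length_eq_zero_iff.mp this
    rw [phi_eq_nil hB hC hnil]
  | true :: w' =>
    exfalso
    rw [phi_cons] at hw
    simp only [cond_true, List.length_append] at hw
    match w' with
    | [] => simp [phi] at hw; omega
    | true :: w'' =>
      exact absurd ((List.isChain_cons_cons.mp hno).1 rfl) (by simp [Rel])
    | false :: w'' =>
      rw [phi_cons] at hw
      simp only [cond_false, List.length_append] at hw
      omega

theorem occ_chain {B C : List Bool} (hC : C ≠ []) (hlen : C.length < B.length)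
    (hkey : ∀ t, NoTT t → ∀ x y, x ++ B ++ y = phi B C t →
      ∃ t₁ t₂, t = t₁ ++ t₂ ∧ x = phi B C t₁) :
    ∀ (k : ℕ) (t : List Bool), NoTT t → ∀ x y : List Bool,
      x ++ (List.replicate (k + 1) B).flatten ++ y = phi B C t →
      ∃ u v, t = u ++ List.replicate k false ++ v ∧ x = phi B C u ∧ B ++ y = phi B C v := by
  have hBpos : 0 < B.length := by have := List.length_pos_iff.mpr hC; omega
  intro k
  induction k with
  | zero =>
    intro t hno x y h
    have h' : x ++ B ++ y = phi B C t := by simpa using h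
    obtain ⟨t₁, t₂, rfl, hx⟩ := hkey t hno x y h'
    refine ⟨t₁, t₂, by simp, hx, ?_⟩
    rw [phi_append, ← hx, List.append_assoc] at h'
    exact List.append_cancel_left h'
  | succ k ih =>
    intro t hno x y h
    rw [List.replicate_succ, List.flatten_cons] at h
    have h' : (x ++ B) ++ (List.replicate (k + 1) B).flatten ++ y = phi B C t := by
      rw [← h]
      simp [List.append_assoc]
    obtain ⟨u', v', hsplit, hxu, hBv⟩ := ih t hno (x ++ B) y h'
    obtain ⟨t₁, t₂, hsplit2, hxt⟩ := hkey t hno x ((List.replicate (k + 1) B).flatten ++ y)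
      (by rw [← h]; simp [List.append_assoc])
    have hp1 : t₁ <+: t := ⟨t₂, hsplit2.symm⟩
    have hp2 : u' <+: t := ⟨List.replicate k false ++ v', by rw [hsplit]; simp [List.append_assoc]⟩
    rcases List.prefix_or_prefix_of_prefix hp1 hp2 with h12 | h21
    · obtain ⟨w, rfl⟩ := h12
      have hphiw : phi B C w = B := by
        rw [phi_append, ← hxt] at hxu
        exact (List.append_cancel_left hxu).symm
      have hwno : NoTT w := by
        refine List.IsChain.infix hno ⟨t₁, List.replicate k false ++ v', ?_⟩
        rw [hsplit]
        simp [List.append_assoc]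
      have hwf : w = [false] := gap hC hlen w hwno (by rw [hphiw])
      subst hwf
      refine ⟨t₁, v', ?_, hxt, hBv⟩
      rw [hsplit]
      simp [List.replicate_succ, List.append_assoc]
    · exfalso
      obtain ⟨w, rfl⟩ := h21
      have h1 := congrArg List.length hxu
      have h2 := congrArg List.length hxt
      rw [phi_append] at h2
      simp [List.length_append] at h1 h2
      omega

theorem flatten_replicate_comm (m : ℕ) (l : List Bool) :
    l ++ (List.replicate m l).flatten = (List.replicate m l).flatten ++ l := by
  induction m with
  | zero => simp
  | succ m ih => simp [List.replicate_succ, List.append_assoc, ← ih]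

theorem comm_swap (e : ℕ → ℕ) : ∀ n, 1 ≤ n → ∃ (w : List Bool) (a b : Bool), a ≠ b ∧
    stdWord e (n + 1) ++ stdWord e n = w ++ [a, b] ∧
    stdWord e n ++ stdWord e (n + 1) = w ++ [b, a] := by
  intro n hn
  induction n, hn using Nat.le_induction with
  | base =>
    refine ⟨List.replicate (e 1) false, true, false, by simp, ?_, ?_⟩
    · rw [stdWord_two, stdWord_one]
      simp
    · rw [stdWord_two, stdWord_one]
      rw [show List.replicate (e 1) false ++ [false, true]
        = (false :: List.replicate (e 1) false) ++ [true] by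
          rw [← List.replicate_succ, List.replicate_succ']; simp]
      simp
  | succ n hn ih =>
    obtain ⟨w, a, b, hab, h1, h2⟩ := ih
    refine ⟨(List.replicate (e (n + 1)) (stdWord e (n + 1))).flatten ++ w, b, a, hab.symm, ?_, ?_⟩
    · rw [stdWord_add_two, List.append_assoc, h2, List.append_assoc]
    · rw [stdWord_add_two, ← List.append_assoc, flatten_replicate_comm, List.append_assoc, h1,
        List.append_assoc]

theorem phi_stdWord (e : ℕ → ℕ) (n : ℕ) : ∀ k : ℕ,
    stdWord e (n + 1 + k)
      = phi (stdWord e (n + 1)) (stdWord e n) (stdWord (fun i => e (n + i)) (k + 1))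
  | 0 => by simp [stdWord_one, phi]
  | 1 => by
    rw [show n + 1 + 1 = n + 2 from rfl, stdWord_add_two, stdWord_two, phi_append,
      phi_replicate_false]
    simp [phi]
  | (j + 2) => by
    have ih1 := phi_stdWord e n (j + 1)
    have ih0 := phi_stdWord e n j
    rw [show n + 1 + (j + 2) = (n + 1 + j) + 2 from by omega, stdWord_add_two,
      show stdWord (fun i => e (n + i)) (j + 2 + 1) = stdWord (fun i => e (n + i)) ((j + 1) + 2)
        from rfl,
      stdWord_add_two, phi_append, phi_flatten_replicate, ← ih1, ← ih0,
      show n + (j + 1 + 1) = n + 1 + j + 1 from by omega,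
      show n + 1 + (j + 1) = n + 1 + j + 1 from by omega]

theorem replicate_false_cons (m : ℕ) (l : List Bool) :
    List.replicate m false ++ (false :: l) = List.replicate (m + 1) false ++ l := by
  rw [List.replicate_succ', List.append_assoc]
  rfl

theorem cons_false_replicate (m : ℕ) (l : List Bool) :
    List.replicate m false ++ (false :: l) = false :: (List.replicate m false ++ l) := by
  induction m with
  | zero => rfl
  | succ m ih => simp [List.replicate_succ, ih]

theorem key (e : ℕ → ℕ) (he : ∀ i, 1 ≤ i → 0 < e i) :
    ∀ n, 1 ≤ n → ∀ t, NoTT t → ∀ x y : List Bool,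
      x ++ stdWord e (n + 1) ++ y = phi (stdWord e (n + 1)) (stdWord e n) t →
      ∃ t₁ t₂, t = t₁ ++ t₂ ∧ x = phi (stdWord e (n + 1)) (stdWord e n) t₁ := by
  intro n hn
  induction n, hn using Nat.le_induction with
  | base =>
    intro t hno x y h
    rw [show (1:ℕ) + 1 = 2 by norm_num] at h ⊢
    rw [stdWord_two, stdWord_one] at h ⊢
    obtain ⟨t₁, t₂, rfl, hx, hy⟩ := one (e 1) t (x ++ List.replicate (e 1) false) y (by
      rw [← h]; simp [List.append_assoc])
    exact ⟨t₁, false :: t₂, rfl, List.append_cancel_right hx⟩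
  | succ n hn ih =>
    intro t hno x y h
    have hQ : 1 ≤ e (n + 1) := he (n + 1) (by omega)
    have hCne : stdWord e n ≠ [] := stdWord_ne_nil e n
    have hBne : stdWord e (n + 1) ≠ [] := stdWord_ne_nil e (n + 1)
    have hlen : (stdWord e n).length < (stdWord e (n + 1)).length := length_stdWord_lt e he n hn
    have hcomp : ∀ s : List Bool,
        phi (stdWord e (n + 2)) (stdWord e (n + 1)) s
          = phi (stdWord e (n + 1)) (stdWord e n)
              (phi (List.replicate (e (n + 1)) false ++ [true]) [false] s) := by
      intro s
      rw [phi_comp]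
      congr 1
      · rw [phi_append, phi_replicate_false, stdWord_add_two]
        simp [phi]
      · simp [phi]
    have hnoψ : NoTT (phi (List.replicate (e (n + 1)) false ++ [true]) [false] t) :=
      (OK_psi hQ t).1
    rw [show n + 1 + 1 = n + 2 by omega] at h ⊢
    rw [hcomp t] at h
    obtain ⟨Q', hQ'⟩ : ∃ Q', e (n + 1) = Q' + 1 := ⟨e (n + 1) - 1, by omega⟩
    have h' : x ++ (List.replicate (Q' + 1) (stdWord e (n + 1))).flatten
        ++ (stdWord e n ++ y)
        = phi (stdWord e (n + 1)) (stdWord e n)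
            (phi (List.replicate (e (n + 1)) false ++ [true]) [false] t) := by
      rw [← h, stdWord_add_two, ← hQ']
      simp [List.append_assoc]
    obtain ⟨u, v, hsplit, hxu, hBv⟩ := occ_chain hCne hlen ih Q'
      (phi (List.replicate (e (n + 1)) false ++ [true]) [false] t) hnoψ x (stdWord e n ++ y) h'
    rcases v with _ | ⟨c, v₂⟩
    · exfalso
      rw [phi_nil] at hBv
      exact hBne (List.append_eq_nil_iff.mp hBv).1
    · cases c
      · -- v = false :: v₂
        rw [phi_cons] at hBv
        simp only [cond_false] at hBv
        have hCy := List.append_cancel_left hBv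
        rcases v₂ with _ | ⟨c₂, v₃⟩
        · exfalso
          rw [phi_nil] at hCy
          exact hCne (List.append_eq_nil_iff.mp hCy).1
        · cases c₂
          · -- v = false :: false :: v₃
            have hsplit' : phi (List.replicate (e (n + 1)) false ++ [true]) [false] t
                = u ++ List.replicate (Q' + 1 + 1) false ++ v₃ := by
              rw [hsplit, List.append_assoc, replicate_false_cons, replicate_false_cons,
                ← List.append_assoc]
            rcases List.eq_nil_or_concat u with rfl | ⟨u', c, rfl⟩
            · rw [phi_nil] at hxu
              exact ⟨[], t, by simp, by simpa [phi] using hxu⟩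
            · rw [List.concat_eq_append] at hsplit' hxu
              cases c
              · -- c = false : run contradiction
                exfalso
                refine run (e (n + 1)) t hno u' v₃ ?_
                rw [hsplit', show e (n + 1) + 2 = Q' + 1 + 1 + 1 by omega]
                simp [List.replicate_succ', List.append_assoc, cons_false_replicate]
              · -- c = true : one
                obtain ⟨t₁, t₂, hteq, hu', hrest⟩ := one (e (n + 1)) t u'
                  (List.replicate (Q' + 1 + 1) false ++ v₃) (by
                    rw [hsplit']
                    simp [List.append_assoc])
                refine ⟨t₁ ++ [false], t₂, by rw [hteq]; simp, ?_⟩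
                rw [hcomp (t₁ ++ [false]), hxu, hu']
                congr 1
                rw [phi_append]
                simp [phi, List.append_assoc]
          · -- v = false :: true :: v₃
            obtain ⟨t₁, t₂, hteq, hu, hrest⟩ := one (e (n + 1)) t
              (u ++ List.replicate (e (n + 1)) false) v₃ (by
                rw [hsplit, hQ']
                simp [List.replicate_succ', List.append_assoc])
            have huψ : u = phi (List.replicate (e (n + 1)) false ++ [true]) [false] t₁ :=
              List.append_cancel_right hu
            exact ⟨t₁, false :: t₂, hteq, by rw [hcomp t₁, hxu, huψ]⟩
      · -- v = true :: v₂
        have hnov : NoTT (true :: v₂) :=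
          List.IsChain.suffix hnoψ ⟨u ++ List.replicate Q' false, hsplit.symm⟩
        rcases v₂ with _ | ⟨c₂, v₃⟩
        · exfalso
          rw [phi_cons] at hBv
          simp only [cond_true] at hBv
          have hl := congrArg List.length hBv
          have hBpos : 0 < (stdWord e (n + 1)).length := length_stdWord_pos e (n + 1)
          simp [phi] at hl
          omega
        · cases c₂
          · -- v = true :: false :: v₃ : comm_swap contradiction
            exfalso
            obtain ⟨w, a, b, hab, h1, h2⟩ := comm_swap e n hn
            rw [phi_cons, phi_cons] at hBv
            simp only [cond_true, cond_false] at hBv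
            rw [← List.append_assoc, ← List.append_assoc, h1, h2,
              List.append_assoc, List.append_assoc] at hBv
            have hcc := List.append_cancel_left hBv
            simp at hcc
            exact hab hcc.1
          · -- v = true :: true :: v₃
            exact absurd ((List.isChain_cons_cons.mp hnov).1 rfl) (by simp)

end SturmAux

open SturmAux in
/-- If `a ∈ {0,1}` is the last symbol of the standard word `s_n` (`n ≥ 1`),
then the word `a s_n^{d_{n+1}+2}` is not an element of `Fac(d)`. -/
theorem last_letter_power_not_factor (d : ℕ → ℕ) (hd : ∀ i, 1 ≤ i → 0 < d i)
    (n : ℕ) (hn : 1 ≤ n) (a : Bool)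
    (ha : (stdWord d (n + 1)).getLast? = some a) :
    a :: (List.replicate (d (n + 1) + 2) (stdWord d (n + 1))).flatten ∉ Fac d := by
  intro hmem
  obtain ⟨m, hm⟩ := hmem
  have hM : m ≤ max m (n + 1) := le_max_left _ _
  have hm' : a :: (List.replicate (d (n + 1) + 2) (stdWord d (n + 1))).flatten
      <:+: stdWord d (max m (n + 1) + 1) :=
    hm.trans (stdWord_prefix_mono d hd hM).isInfix
  have hMn : n + 1 ≤ max m (n + 1) := le_max_right _ _
  obtain ⟨k, hk⟩ : ∃ k, max m (n + 1) = n + k := ⟨max m (n + 1) - n, by omega⟩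
  have hk1 : 1 ≤ k := by omega
  rw [hk] at hm'
  have hphi : stdWord d (n + k + 1)
      = phi (stdWord d (n + 1)) (stdWord d n) (stdWord (fun i => d (n + i)) (k + 1)) := by
    rw [show n + k + 1 = n + 1 + k by omega]
    exact phi_stdWord d n k
  obtain ⟨x, y, heq⟩ := hm'
  rw [hphi] at heq
  have he' : ∀ i, 1 ≤ i → 0 < (fun i => d (n + i)) i := fun i hi => hd (n + i) (by omega)
  have hnot : NoTT (stdWord (fun i => d (n + i)) (k + 1)) :=
    NoTT_stdWord _ he' (k + 1)
  have heq' : (x ++ [a]) ++ (List.replicate ((d (n + 1) + 1) + 1) (stdWord d (n + 1))).flatten ++ y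
      = phi (stdWord d (n + 1)) (stdWord d n) (stdWord (fun i => d (n + i)) (k + 1)) := by
    rw [← heq, show d (n + 1) + 1 + 1 = d (n + 1) + 2 by omega]
    simp [List.append_assoc]
  obtain ⟨u, v, hsplit, hxu, -⟩ := occ_chain (stdWord_ne_nil d n)
    (length_stdWord_lt d hd n hn) (key d hd n hn) (d (n + 1) + 1)
    (stdWord (fun i => d (n + i)) (k + 1)) hnot (x ++ [a]) y heq'
  rcases List.eq_nil_or_concat u with rfl | ⟨u', c, rfl⟩
  · rw [phi_nil] at hxu
    simp at hxu
  · rw [List.concat_eq_append] at hsplit hxu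
    have hlast : (phi (stdWord d (n + 1)) (stdWord d n) (u' ++ [c])).getLast? = some a := by
      rw [← hxu]
      exact List.getLast?_concat
    rw [phi_append] at hlast
    have hne : phi (stdWord d (n + 1)) (stdWord d n) [c] ≠ [] := by
      cases c <;> simp [phi] <;> exact stdWord_ne_nil d _
    rw [List.getLast?_append_of_ne_nil _ hne] at hlast
    have hblk : (cond c (stdWord d n) (stdWord d (n + 1))).getLast? = some a := by
      simpa [phi] using hlast
    cases c
    · -- c = false : run contradiction
      simp only [cond_false] at hblk
      have hsplit' : stdWord (fun i => d (n + i)) (k + 1)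
          = u' ++ List.replicate (d (n + 1) + 2) false ++ v := by
        rw [hsplit, show d (n + 1) + 2 = d (n + 1) + 1 + 1 by omega]
        simp [List.replicate_succ, List.append_assoc]
      have ht := phi_stdWord (fun i => d (n + i)) 1 (k - 1)
      rw [show (1 : ℕ) + 1 + (k - 1) = k + 1 by omega, stdWord_two, stdWord_one] at ht
      exact run (d (n + 1)) _
        (NoTT_stdWord _ (fun i hi => hd (n + (1 + i)) (by omega)) (k - 1 + 1)) u' v
        (by rw [← ht]; exact hsplit'.symm)
    · -- c = true : parity contradiction
      simp only [cond_true] at hblk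
      rw [getLast?_stdWord] at hblk ha
      have h1 : decide (n % 2 = 0) = a := by simpa using hblk
      have h2 : decide ((n + 1) % 2 = 0) = a := by simpa using ha
      rw [← h2] at h1
      exact absurd (decide_eq_decide.mp h1) (by omega)
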